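/- If a point v lies outside a compact convex body C ⊆ ℝ³ and every vertex of a convex polytope C is visible from v (the open segment (v, c) misses the interior of C for each vertex c), then v is not in the interior of any simplex spanned by interior points of C; in particular, for C a regular octahedron and Θ the regular tetrahedron spanned by four alternating faces of C, if all six vertices of C are visible from v then v is not in the interior of Θ. -/

import Mathlib

noncomputable def e (i : Fin 3) : EuclideanSpace ℝ (Fin 3) :=
  EuclideanSpace.single i 1

noncomputable def Oct : Set (EuclideanSpace ℝ (Fin 3)) :=
  convexHull ℝ {e 0, e 1, e 2, -e 0, -e 1, -e 2}

def Tet : Set (EuclideanSpace ℝ (Fin 3)) :=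
  {p | p 0 + p 1 + p 2 ≤ 1 ∧ p 0 - p 1 - p 2 ≤ 1 ∧
       -p 0 + p 1 - p 2 ≤ 1 ∧ -p 0 - p 1 + p 2 ≤ 1}

lemma e_apply (i j : Fin 3) : e i j = if j = i then 1 else 0 := by
  simp [e, EuclideanSpace.single_apply]

@[simp] lemma e00 : e 0 0 = 1 := by rw [e_apply]; norm_num
@[simp] lemma e01 : e 0 1 = 0 := by rw [e_apply, if_neg (by decide)]
@[simp] lemma e02 : e 0 2 = 0 := by rw [e_apply, if_neg (by decide)]
@[simp] lemma e10 : e 1 0 = 0 := by rw [e_apply, if_neg (by decide)]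
@[simp] lemma e11 : e 1 1 = 1 := by rw [e_apply]; norm_num
@[simp] lemma e12 : e 1 2 = 0 := by rw [e_apply, if_neg (by decide)]
@[simp] lemma e20 : e 2 0 = 0 := by rw [e_apply, if_neg (by decide)]
@[simp] lemma e21 : e 2 1 = 0 := by rw [e_apply, if_neg (by decide)]
@[simp] lemma e22 : e 2 2 = 1 := by rw [e_apply]; norm_num

lemma memOct (p : EuclideanSpace ℝ (Fin 3)) (h : |p 0| + |p 1| + |p 2| ≤ 1) : p ∈ Oct := by
  classical
  set V : Set (EuclideanSpace ℝ (Fin 3)) := {e 0, e 1, e 2, -e 0, -e 1, -e 2} with hV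
  have hzero : (0 : EuclideanSpace ℝ (Fin 3)) ∈ Oct := by
    have h0 : (0 : EuclideanSpace ℝ (Fin 3)) = (1/2 : ℝ) • e 0 + (1/2 : ℝ) • (-e 0) := by
      ext j; show (0:ℝ) = (1/2) * e 0 j + (1/2) * (-(e 0 j)); ring
    rw [h0]
    exact (convex_convexHull ℝ V) (subset_convexHull ℝ V (by simp [hV]))
      (subset_convexHull ℝ V (by simp [hV])) (by norm_num) (by norm_num) (by norm_num)
  have hvert : ∀ i : Fin 3, e i ∈ Oct ∧ -e i ∈ Oct := by
    intro i
    constructor <;> apply subset_convexHull ℝ V <;> fin_cases i <;> simp [hV]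
  -- write p as a convex combination
  let u : Fin 3 → EuclideanSpace ℝ (Fin 3) := fun i => if 0 ≤ p i then e i else -e i
  let w : Fin 4 → ℝ := ![|p 0|, |p 1|, |p 2|, 1 - (|p 0| + |p 1| + |p 2|)]
  let z : Fin 4 → EuclideanSpace ℝ (Fin 3) := ![u 0, u 1, u 2, 0]
  have hw : ∀ i ∈ Finset.univ, 0 ≤ w i := by
    intro i _
    fin_cases i
    · exact abs_nonneg _
    · exact abs_nonneg _
    · exact abs_nonneg _
    · show (0:ℝ) ≤ 1 - (|p 0| + |p 1| + |p 2|); linarith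
  have hw1 : ∑ i ∈ Finset.univ, w i = 1 := by
    simp [Fin.sum_univ_four, w]
  have hz : ∀ i ∈ Finset.univ, z i ∈ Oct := by
    intro i _
    fin_cases i
    · show (if 0 ≤ p 0 then e 0 else -e 0) ∈ Oct
      split_ifs; exacts [(hvert 0).1, (hvert 0).2]
    · show (if 0 ≤ p 1 then e 1 else -e 1) ∈ Oct
      split_ifs; exacts [(hvert 1).1, (hvert 1).2]
    · show (if 0 ≤ p 2 then e 2 else -e 2) ∈ Oct
      split_ifs; exacts [(hvert 2).1, (hvert 2).2]
    · exact hzero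
  have hrep : p = ∑ i ∈ Finset.univ, w i • z i := by
    rw [Fin.sum_univ_four]
    ext j
    have huc : ∀ i : Fin 3, |p i| * (u i) j = p i * (e i j) := by
      intro i
      by_cases hi : 0 ≤ p i
      · simp only [u, if_pos hi, abs_of_nonneg hi]
      · push_neg at hi
        have : (u i) j = -(e i j) := by simp only [u, if_neg (not_le.mpr hi)]; rfl
        rw [this, abs_of_neg hi]; ring
    show p j = |p 0| * (u 0) j + |p 1| * (u 1) j + |p 2| * (u 2) j
        + (1 - (|p 0| + |p 1| + |p 2|)) * (0:ℝ)
    rw [huc 0, huc 1, huc 2]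
    fin_cases j <;> simp
  rw [hrep]
  exact (convex_convexHull ℝ V).sum_mem hw hw1 hz

lemma memIntOct (p : EuclideanSpace ℝ (Fin 3)) (h : |p 0| + |p 1| + |p 2| < 1) :
    p ∈ interior Oct := by
  have hc : Continuous fun q : EuclideanSpace ℝ (Fin 3) => |q 0| + |q 1| + |q 2| := by
    have h0 := (EuclideanSpace.proj (0 : Fin 3) : EuclideanSpace ℝ (Fin 3) →L[ℝ] ℝ).continuous
    have h1 := (EuclideanSpace.proj (1 : Fin 3) : EuclideanSpace ℝ (Fin 3) →L[ℝ] ℝ).continuous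
    have h2 := (EuclideanSpace.proj (2 : Fin 3) : EuclideanSpace ℝ (Fin 3) →L[ℝ] ℝ).continuous
    exact ((h0.abs.add h1.abs).add h2.abs)
  exact interior_maximal (fun q hq => memOct q hq.le)
    (isOpen_lt hc continuous_const) h

lemma abs_eq_sign_mul (s x : ℝ) (hs : s = 1 ∨ s = -1) (h : 0 ≤ s * x) : |x| = s * x := by
  rcases hs with rfl | rfl
  · rw [one_mul] at h ⊢; exact abs_of_nonneg h
  · have : x ≤ 0 := by linarith
    rw [abs_of_nonpos this]; ring

lemma intTet (v : EuclideanSpace ℝ (Fin 3)) (h : v ∈ interior Tet) :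
    v 0 + v 1 + v 2 < 1 ∧ v 0 - v 1 - v 2 < 1 ∧
    -v 0 + v 1 - v 2 < 1 ∧ -v 0 - v 1 + v 2 < 1 := by
  rw [mem_interior_iff_mem_nhds, Metric.mem_nhds_iff] at h
  obtain ⟨ε, hε, hball⟩ := h
  have hnorm : ‖e 0‖ = 1 := by simp [e]
  have key : ∀ s : ℝ, s = 1 ∨ s = -1 → v + (ε/2) • (s • e 0) ∈ Tet := by
    intro s hs
    apply hball
    rw [Metric.mem_ball, dist_eq_norm]
    have h' : v + (ε/2) • (s • e 0) - v = (ε/2) • (s • e 0) := by abel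
    rw [h', norm_smul, norm_smul, hnorm]
    rcases hs with rfl | rfl <;> simp [abs_of_pos hε] <;> linarith
  have hco : ∀ (s : ℝ) (j : Fin 3), (v + (ε/2) • (s • e 0)) j
      = v j + (ε/2) * (s * e 0 j) := fun s j => rfl
  have k1 := key 1 (Or.inl rfl)
  have k2 := key (-1) (Or.inr rfl)
  simp only [Tet, Set.mem_setOf_eq, hco, e00, e01, e02] at k1 k2
  norm_num at k1 k2
  exact ⟨by linarith [k1.1], by linarith [k1.2.1], by linarith [k2.2.2.1], by linarith [k2.2.2.2]⟩

set_option maxHeartbeats 1000000 in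
lemma keyLemma (v : EuclideanSpace ℝ (Fin 3)) (ε : Fin 3 → ℝ)
    (hε : ∀ i, ε i = 1 ∨ ε i = -1)
    (h1 : 1 < ε 0 * v 0 + ε 1 * v 1 + ε 2 * v 2)
    (h2 : -(ε 0 * v 0) + ε 1 * v 1 + ε 2 * v 2 < 1)
    (h3 : ε 0 * v 0 - ε 1 * v 1 + ε 2 * v 2 ≤ 1)
    (h4 : ε 0 * v 0 + ε 1 * v 1 - ε 2 * v 2 ≤ 1) :
    (openSegment ℝ v ((-ε 0) • e 0) ∩ interior Oct).Nonempty := by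
  set A := ε 0 * v 0 with hA
  set B := ε 1 * v 1 with hB
  set C := ε 2 * v 2 with hC
  have hApos : 0 < A := by linarith
  have hBpos : 0 < B := by linarith
  have hCpos : 0 < C := by linarith
  set g := A + B + C with hg
  have hg1 : 1 < g := h1
  set t₁ : ℝ := (g - 1) / (g + 1) with ht₁
  set t₂ : ℝ := A / (A + 1) with ht₂
  have ht₁pos : 0 < t₁ := div_pos (by linarith) (by linarith)
  have ht₁₂ : t₁ < t₂ := by
    rw [ht₁, ht₂, div_lt_div_iff₀ (by linarith) (by linarith)]
    nlinarith
  have ht₂1 : t₂ < 1 := by rw [ht₂, div_lt_one (by linarith)]; linarith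
  set t : ℝ := (t₁ + t₂) / 2 with ht
  have htpos : 0 < t := by positivity
  have ht1 : t < 1 := by simp only [ht]; linarith
  have hlt₂ : t < t₂ := by simp only [ht]; linarith
  have hgt₁ : t₁ < t := by simp only [ht]; linarith
  have hp0pos : 0 < (1 - t) * A - t := by
    have := (lt_div_iff₀ (show (0:ℝ) < A + 1 by linarith)).mp (ht₂ ▸ hlt₂)
    nlinarith
  have hsum : (1 - t) * g - t < 1 := by
    have := (div_lt_iff₀ (show (0:ℝ) < g + 1 by linarith)).mp (ht₁ ▸ hgt₁)
    nlinarith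
  set p : EuclideanSpace ℝ (Fin 3) := (1 - t) • v + t • ((-ε 0) • e 0) with hp
  have hε0sq : ε 0 * ε 0 = 1 := by rcases hε 0 with h | h <;> rw [h] <;> norm_num
  have hpc : ∀ j : Fin 3, p j = (1 - t) * v j + t * (-ε 0 * e 0 j) := fun j => rfl
  have hp0 : ε 0 * p 0 = (1 - t) * A - t := by
    rw [hpc 0, e00, hA]; linear_combination (-t : ℝ) * hε0sq
  have hp1 : ε 1 * p 1 = (1 - t) * B := by rw [hpc 1, e01, hB]; ring
  have hp2 : ε 2 * p 2 = (1 - t) * C := by rw [hpc 2, e02, hC]; ring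
  have habs : |p 0| + |p 1| + |p 2| < 1 := by
    rw [abs_eq_sign_mul (ε 0) (p 0) (hε 0) (by rw [hp0]; linarith),
        abs_eq_sign_mul (ε 1) (p 1) (hε 1) (by rw [hp1]; nlinarith),
        abs_eq_sign_mul (ε 2) (p 2) (hε 2) (by rw [hp2]; nlinarith),
        hp0, hp1, hp2]
    nlinarith
  exact ⟨p, ⟨1 - t, t, by linarith, htpos, by ring, rfl⟩, memIntOct p habs⟩

theorem visible_vertices_imply_outside_tetrahedron
    (v : EuclideanSpace ℝ (Fin 3)) (hv : v ∉ Oct)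
    (hvis : ∀ c ∈ ({e 0, e 1, e 2, -e 0, -e 1, -e 2} :
        Set (EuclideanSpace ℝ (Fin 3))),
      openSegment ℝ v c ∩ interior Oct = ∅) :
    v ∉ interior Tet := by
  intro hint
  obtain ⟨s1, s2, s3, s4⟩ := intTet v hint
  have hf : 1 < |v 0| + |v 1| + |v 2| := by
    by_contra h
    push_neg at h
    exact hv (memOct v h)
  have hvE : e 0 ∈ ({e 0, e 1, e 2, -e 0, -e 1, -e 2} :
      Set (EuclideanSpace ℝ (Fin 3))) := by simp
  have hvNE : -e 0 ∈ ({e 0, e 1, e 2, -e 0, -e 1, -e 2} :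
      Set (EuclideanSpace ℝ (Fin 3))) := by simp
  rcases le_or_gt 0 (v 0) with h0 | h0 <;> rcases le_or_gt 0 (v 1) with h1 | h1 <;>
    rcases le_or_gt 0 (v 2) with h2 | h2
  -- (+,+,+)
  · rw [abs_of_nonneg h0, abs_of_nonneg h1, abs_of_nonneg h2] at hf; linarith
  -- (+,+,-) : ε = (1,1,-1), vertex -e 0
  · rw [abs_of_nonneg h0, abs_of_nonneg h1, abs_of_neg h2] at hf
    obtain ⟨p, hpseg, hpint⟩ := keyLemma v ![1, 1, -1]
      (by intro i; fin_cases i <;> norm_num)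
      (by norm_num [Matrix.cons_val_two]; linarith) (by norm_num [Matrix.cons_val_two]; linarith)
      (by norm_num [Matrix.cons_val_two]; linarith) (by norm_num [Matrix.cons_val_two]; linarith)
    norm_num at hpseg
    have hE := hvis (-e 0) hvNE
    rw [Set.eq_empty_iff_forall_notMem] at hE
    exact hE p ⟨hpseg, hpint⟩
  -- (+,-,+) : ε = (1,-1,1), vertex -e 0
  · rw [abs_of_nonneg h0, abs_of_neg h1, abs_of_nonneg h2] at hf
    obtain ⟨p, hpseg, hpint⟩ := keyLemma v ![1, -1, 1]
      (by intro i; fin_cases i <;> norm_num)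
      (by norm_num [Matrix.cons_val_two]; linarith) (by norm_num [Matrix.cons_val_two]; linarith)
      (by norm_num [Matrix.cons_val_two]; linarith) (by norm_num [Matrix.cons_val_two]; linarith)
    norm_num at hpseg
    have hE := hvis (-e 0) hvNE
    rw [Set.eq_empty_iff_forall_notMem] at hE
    exact hE p ⟨hpseg, hpint⟩
  -- (+,-,-)
  · rw [abs_of_nonneg h0, abs_of_neg h1, abs_of_neg h2] at hf; linarith
  -- (-,+,+) : ε = (-1,1,1), vertex e 0
  · rw [abs_of_neg h0, abs_of_nonneg h1, abs_of_nonneg h2] at hf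
    obtain ⟨p, hpseg, hpint⟩ := keyLemma v ![-1, 1, 1]
      (by intro i; fin_cases i <;> norm_num)
      (by norm_num [Matrix.cons_val_two]; linarith) (by norm_num [Matrix.cons_val_two]; linarith)
      (by norm_num [Matrix.cons_val_two]; linarith) (by norm_num [Matrix.cons_val_two]; linarith)
    norm_num at hpseg
    have hE := hvis (e 0) hvE
    rw [Set.eq_empty_iff_forall_notMem] at hE
    exact hE p ⟨hpseg, hpint⟩
  -- (-,+,-)
  · rw [abs_of_neg h0, abs_of_nonneg h1, abs_of_neg h2] at hf; linarith
  -- (-,-,+)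
  · rw [abs_of_neg h0, abs_of_neg h1, abs_of_nonneg h2] at hf; linarith
  -- (-,-,-) : ε = (-1,-1,-1), vertex e 0
  · rw [abs_of_neg h0, abs_of_neg h1, abs_of_neg h2] at hf
    obtain ⟨p, hpseg, hpint⟩ := keyLemma v ![-1, -1, -1]
      (by intro i; fin_cases i <;> norm_num)
      (by norm_num [Matrix.cons_val_two]; linarith) (by norm_num [Matrix.cons_val_two]; linarith)
      (by norm_num [Matrix.cons_val_two]; linarith) (by norm_num [Matrix.cons_val_two]; linarith)
    norm_num at hpseg
    have hE := hvis (e 0) hvE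
    rw [Set.eq_empty_iff_forall_notMem] at hE
    exact hE p ⟨hpseg, hpint⟩
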